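/- Suppose G_L is connected, Ω is a nonempty finite set of routings, and ρ : E_P → ℝ satisfies 0 ≤ ρ e ≤ 1 for all e. Then there exist a routing M* ∈ Ω and a nonempty set T of spanning trees of G_L such that ∏_{e ∈ ⋂_{τ∈T} E_P(τ,M*)} (1 − ρ e) = max_{M ∈ Ω} ∏_{e ∈ R(M)} (1 − ρ e); that is, there exists a protecting spanning tree set together with a routing whose survivable probability equals the maximal survivable probability of the cross-layer network. (Paper's Theorem 1.) -/

import Mathlib

open SimpleGraph
lemma reachable_of_not_bridge {V : Type*} {G : SimpleGraph V} {v w : V}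
    (hvw : G.Adj v w) (hnb : ¬ G.IsBridge s(v, w)) :
    ∀ a b : V, G.Reachable a b → (G \ SimpleGraph.fromEdgeSet {s(v, w)}).Reachable a b := by
  have hr : (G \ SimpleGraph.fromEdgeSet {s(v, w)}).Reachable v w := by
    by_contra h
    exact hnb h
  intro a b ⟨p⟩
  induction p with
  | nil => exact Reachable.refl _
  | cons h p ih =>
    rename_i x y z
    refine Reachable.trans ?_ ih
    by_cases he : s(x, y) = s(v, w)
    · rcases Sym2.eq_iff.mp he with ⟨rfl, rfl⟩ | ⟨rfl, rfl⟩
      · exact hr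
      · exact hr.symm
    · exact SimpleGraph.Adj.reachable (by
        simp only [SimpleGraph.sdiff_adj, SimpleGraph.fromEdgeSet_adj]
        exact ⟨h, fun hc => he hc.1⟩)

lemma exists_spanning_tree' {V : Type*} [Fintype V] :
    ∀ (n : ℕ) (G : SimpleGraph V), G.edgeSet.ncard = n → G.Connected →
      ∃ τ : SimpleGraph V, τ ≤ G ∧ τ.Connected ∧ τ.IsAcyclic := by
  intro n
  induction n using Nat.strong_induction_on with
  | _ n ih =>
    intro G hcard hconn
    by_cases hac : G.IsAcyclic
    · exact ⟨G, le_refl G, hconn, hac⟩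
    · rw [isAcyclic_iff_forall_adj_isBridge] at hac
      push_neg at hac
      obtain ⟨v, w, hadj, hnb⟩ := hac
      set G' := G \ SimpleGraph.fromEdgeSet {s(v, w)} with hG'
      have hle : G' ≤ G := sdiff_le
      have hne : Nonempty V := hconn.nonempty
      have hconn' : G'.Connected :=
        ⟨fun a b => reachable_of_not_bridge hadj hnb a b (hconn.preconnected a b)⟩
      have hedge : G'.edgeSet = G.edgeSet \ {s(v, w)} := by
        rw [hG', edgeSet_sdiff, edgeSet_fromEdgeSet, edgeSet_sdiff_sdiff_isDiag]
      have hss : G'.edgeSet ⊂ G.edgeSet := by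
        rw [hedge]
        exact Set.sdiff_singleton_ssubset.mpr (G.mem_edgeSet.mpr hadj)
      have hlt : G'.edgeSet.ncard < n := by
        rw [← hcard]
        exact Set.ncard_lt_ncard hss (Set.toFinite _)
      obtain ⟨τ, h1, h2, h3⟩ := ih _ hlt G' rfl hconn'
      exact ⟨τ, h1.trans hle, h2, h3⟩

lemma exists_spanning_tree {V : Type*} [Fintype V] (G : SimpleGraph V) (h : G.Connected) :
    ∃ τ : SimpleGraph V, τ ≤ G ∧ τ.Connected ∧ τ.IsAcyclic :=
  exists_spanning_tree' _ G rfl h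

section defs

/-- A spanning tree of the logical network `G`. -/
def IsSpanningTree {V_L : Type*} (G τ : SimpleGraph V_L) : Prop :=
  τ ≤ G ∧ τ.Connected ∧ τ.IsAcyclic

/-- The surviving graph `G∖e` after failure of the physical link `e`, under routing `M`. -/
def survivingGraph {V_L E_P : Type*} (G : SimpleGraph V_L) (M : Sym2 V_L → Set E_P)
    (e : E_P) : SimpleGraph V_L :=
  SimpleGraph.fromEdgeSet {μ | μ ∈ G.edgeSet ∧ e ∉ M μ}

/-- `E_P(τ,M)`: the physical links utilized by the routing of the branches of `τ`. -/
def utilizedLinks {V_L E_P : Type*} (M : Sym2 V_L → Set E_P) (τ : SimpleGraph V_L) :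
    Set E_P :=
  ⋃ μ ∈ τ.edgeSet, M μ

/-- `R(M)`: the physical links whose individual failure disconnects the logical network. -/
def disconnectingLinks {V_L E_P : Type*} (G : SimpleGraph V_L)
    (M : Sym2 V_L → Set E_P) : Set E_P :=
  {e | ¬ (survivingGraph G M e).Connected}

/-- The survivable probability of a set `S` of physical links: `∏_{e ∈ S} (1 - ρ e)`. -/
noncomputable def survProb {E_P : Type*} [Fintype E_P] (ρ : E_P → ℝ) (S : Set E_P) : ℝ :=
  ∏ e ∈ (Set.toFinite S).toFinset, (1 - ρ e)

end defs

lemma disconnecting_eq_iInter {V_L E_P : Type*} [Fintype V_L]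
    (G_L : SimpleGraph V_L) (hG : G_L.Connected) (M : Sym2 V_L → Set E_P) :
    disconnectingLinks G_L M = ⋂ τ ∈ {τ | IsSpanningTree G_L τ}, utilizedLinks M τ := by
  ext e
  simp only [disconnectingLinks, Set.mem_setOf_eq, Set.mem_iInter]
  constructor
  · intro hnc τ hτ
    by_contra hnu
    apply hnc
    have hle : τ ≤ survivingGraph G_L M e := by
      intro a b hab
      rw [survivingGraph, SimpleGraph.fromEdgeSet_adj]
      refine ⟨⟨hτ.1 hab, ?_⟩, hab.ne⟩
      intro hmem
      exact hnu (Set.mem_biUnion (τ.mem_edgeSet.mpr hab) hmem)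
    exact hτ.2.1.mono hle
  · intro hall
    by_contra hnc
    obtain ⟨τ, hle, hconn, hac⟩ := exists_spanning_tree _ hnc
    have hleG : survivingGraph G_L M e ≤ G_L := by
      intro a b hab
      rw [survivingGraph, SimpleGraph.fromEdgeSet_adj] at hab
      exact G_L.mem_edgeSet.mp hab.1.1
    have := hall τ ⟨hle.trans hleG, hconn, hac⟩
    rw [utilizedLinks, Set.mem_iUnion₂] at this
    obtain ⟨μ, hμ, hmem⟩ := this
    have hμ' := SimpleGraph.edgeSet_mono hle hμ
    rw [survivingGraph, SimpleGraph.edgeSet_fromEdgeSet] at hμ'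
    exact hμ'.1.2 hmem

/-- Paper's Theorem 1: there exists a (nonempty) protecting spanning tree set, together
with a routing `M* ∈ Ω`, whose survivable probability equals the maximal survivable
probability of the cross-layer network. -/
theorem exists_base_protecting_spanning_tree_set
    {V_L E_P : Type*} [Fintype V_L] [Fintype E_P]
    (G_L : SimpleGraph V_L) (hG : G_L.Connected)
    (Ω : Finset (Sym2 V_L → Set E_P)) (hΩ : Ω.Nonempty)
    (ρ : E_P → ℝ) (hρ : ∀ e, 0 ≤ ρ e ∧ ρ e ≤ 1) :
    ∃ M ∈ Ω, ∃ T : Set (SimpleGraph V_L), T.Nonempty ∧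
      (∀ τ ∈ T, IsSpanningTree G_L τ) ∧
      survProb ρ (⋂ τ ∈ T, utilizedLinks M τ) =
        Ω.sup' hΩ (fun M' => survProb ρ (disconnectingLinks G_L M')) := by
  obtain ⟨M, hM, hMeq⟩ := Finset.exists_mem_eq_sup' hΩ
    (fun M' => survProb ρ (disconnectingLinks G_L M'))
  refine ⟨M, hM, {τ | IsSpanningTree G_L τ}, ?_, fun τ hτ => hτ, ?_⟩
  · obtain ⟨τ, h1, h2, h3⟩ := exists_spanning_tree G_L hG
    exact ⟨τ, h1, h2, h3⟩
  · rw [← disconnecting_eq_iInter G_L hG M, hMeq]
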